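/- arXiv:1101.1104 — 2 statements merged into one kernel-verified Lean document; each statement's English description precedes it below -/
import Mathlib

section
/- For positive reals k1, k2, k_{-1}, e, x, the quantity ε := (k2/k1)·e/(e + x + (k_{-1}+k2)/k1)² satisfies ε ≤ k1·e·k2/(k1·e + k2)² ≤ 1/4. -/
theorem epsilon_bound (k1 k2 km1 e x : ℝ) (hk1 : 0 < k1) (hk2 : 0 < k2)
    (hkm1 : 0 < km1) (he : 0 < e) (hx : 0 < x) :
    (k2 / k1) * e / (e + x + (km1 + k2) / k1) ^ 2 ≤ k1 * e * k2 / (k1 * e + k2) ^ 2 ∧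
    k1 * e * k2 / (k1 * e + k2) ^ 2 ≤ 1 / 4 := by
  have hD : (0:ℝ) < e + x + (km1 + k2) / k1 := by positivity
  constructor
  · rw [div_le_div_iff₀ (by positivity) (by positivity)]
    have h : k1 * (e + x + (km1 + k2) / k1) = k1 * e + k1 * x + km1 + k2 := by
      field_simp; ring
    have h2 : k1 * e + k2 ≤ k1 * (e + x + (km1 + k2) / k1) := by
      rw [h]; nlinarith
    have h3 : (k1 * e + k2)^2 ≤ (k1 * (e + x + (km1 + k2) / k1))^2 := by
      apply pow_le_pow_left₀ (by positivity) h2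
    calc k2 / k1 * e * (k1 * e + k2) ^ 2
        ≤ k2 / k1 * e * (k1 * (e + x + (km1 + k2) / k1)) ^ 2 := by
          exact mul_le_mul_of_nonneg_left h3 (by positivity)
      _ = k1 * e * k2 * (e + x + (km1 + k2) / k1) ^ 2 := by
          field_simp
  · rw [div_le_div_iff₀ (by positivity) (by norm_num)]
    nlinarith [sq_nonneg (k1 * e - k2)]
end

section
/- Let A, B be n²×n² diagonal real matrices with strictly positive diagonal entries, Y ∈ ℝⁿ a column vector with positive entries, and V_n the all-ones column vector of size n. Then the n²×n² matrix D = A·((Y V_nᵀ) ⊗ I_n) + B is invertible. -/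
open Matrix
open scoped Kronecker

theorem invertCoeff (n : ℕ) (a b : Fin n × Fin n → ℝ)
    (ha : ∀ p, 0 < a p) (hb : ∀ p, 0 < b p)
    (Y : Fin n → ℝ) (hY : ∀ i, 0 < Y i) :
    IsUnit (Matrix.diagonal a *
      ((Matrix.of fun i _ : Fin n => Y i) ⊗ₖ (1 : Matrix (Fin n) (Fin n) ℝ)) +
      Matrix.diagonal b) := by
  rw [Matrix.isUnit_iff_isUnit_det, isUnit_iff_ne_zero]
  intro hdet
  obtain ⟨v, hv, hmul⟩ := Matrix.exists_mulVec_eq_zero_iff.mpr hdet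
  set S : Fin n → ℝ := fun i2 => ∑ j1, v (j1, i2) with hSdef
  have hK : ∀ p : Fin n × Fin n,
      (((Matrix.of fun i _ : Fin n => Y i) ⊗ₖ (1 : Matrix (Fin n) (Fin n) ℝ)) *ᵥ v) p
        = Y p.1 * S p.2 := by
    intro p
    simp only [Matrix.mulVec, dotProduct, Matrix.kroneckerMap_apply, Matrix.of_apply,
      Matrix.one_apply, Fintype.sum_prod_type, mul_ite, mul_one, mul_zero, ite_mul, zero_mul,
      Finset.sum_ite_eq, Finset.mem_univ, if_true]
    rw [hSdef, Finset.mul_sum]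
  have key : ∀ p : Fin n × Fin n, a p * (Y p.1 * S p.2) + b p * v p = 0 := by
    intro p
    have h := congrFun hmul p
    rw [Matrix.add_mulVec, ← Matrix.mulVec_mulVec] at h
    simp only [Pi.add_apply, Matrix.mulVec_diagonal, Pi.zero_apply] at h
    rw [← h, hK p]
  have hv' : ∀ p : Fin n × Fin n, v p = -(a p * Y p.1 / b p) * S p.2 := by
    intro p
    have hbp := (hb p).ne'
    field_simp
    linarith [key p]
  have hS0 : ∀ i2, S i2 = 0 := by
    intro i2
    set T : ℝ := ∑ i1, a (i1, i2) * Y i1 / b (i1, i2) with hT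
    have hTnn : 0 ≤ T := by
      apply Finset.sum_nonneg
      intro i1 _
      exact div_nonneg (mul_nonneg (ha _).le (hY _).le) (hb _).le
    have h1 : S i2 = -(T * S i2) := by
      calc S i2 = ∑ i1, v (i1, i2) := by rw [hSdef]
        _ = ∑ i1, -(a (i1, i2) * Y i1 / b (i1, i2)) * S i2 :=
            Finset.sum_congr rfl (fun i1 _ => hv' (i1, i2))
        _ = -(T * S i2) := by rw [hT, Finset.sum_mul]; simp [neg_mul]
    have h2 : S i2 * S i2 = -(T * S i2) * S i2 := by rw [← h1]
    have h3 : S i2 * S i2 = 0 := by nlinarith [mul_self_nonneg (S i2), hTnn]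
    exact mul_self_eq_zero.mp h3
  have : v = 0 := by
    funext p
    rw [hv' p, hS0, mul_zero]; rfl
  exact hv this
end
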